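/- Uniform second-moment bound for the logistic solution (equation (4.14)): Let r > 0, σ ∈ ℝ, and let B be a standard Brownian motion. Define g(t,ω) := exp(rt + σB_t(ω)) / (1 + r∫₀ᵗ exp(rs + σB_s(ω)) ds). Then for every t ≥ 0, 𝔼[g(t,·)²] ≤ (1 + σ²/r)². -/

import Mathlib

open Real Filter Topology MeasureTheory ProbabilityTheory intervalIntegral

open scoped NNReal ENNReal

set_option maxHeartbeats 1000000

private lemma cube_amgm {u v : ℝ} (hu : 0 ≤ u) (hv : 0 ≤ v) : 27*(u*v^2) ≤ (u+2*v)^3 := by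
  nlinarith [mul_nonneg (sq_nonneg (u-v)) (by linarith : (0:ℝ) ≤ u + 8*v)]

private lemma exp_amgm (X₁ X₂ : ℝ) {ε : ℝ} (hε : 0 < ε) :
    Real.exp ((X₁ + 2*X₂)/3) ≤ Real.exp X₁/(3*ε^2) + 2*(ε*Real.exp X₂)/3 := by
  have hε' : ε ≠ 0 := ne_of_gt hε
  set u : ℝ := Real.exp X₁/ε^2 with hu_def
  set v : ℝ := ε * Real.exp X₂ with hv_def
  have hu : 0 < u := div_pos (exp_pos _) (by positivity)
  have hv : 0 < v := mul_pos hε (exp_pos _)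
  have h1 : (Real.exp ((X₁+2*X₂)/3))^3 = u * v^2 := by
    have e3 : (Real.exp ((X₁+2*X₂)/3))^3 = Real.exp (X₁ + 2*X₂) := by
      rw [← Real.exp_nat_mul]; ring_nf
    have e2 : Real.exp X₂ ^ 2 = Real.exp (2*X₂) := by
      rw [← Real.exp_nat_mul]; norm_num
    rw [e3, hu_def, hv_def, mul_pow, e2]
    rw [div_mul_eq_mul_div, mul_comm (ε^2), ← mul_assoc, ← Real.exp_add, mul_div_assoc,
      div_self (by positivity : (ε:ℝ)^2 ≠ 0), mul_one]
  have h2 : (Real.exp ((X₁+2*X₂)/3))^3 ≤ ((u+2*v)/3)^3 := by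
    rw [h1, div_pow]
    rw [le_div_iff₀ (by norm_num : (0:ℝ) < 3^3)]
    calc u*v^2 * 3^3 = 27*(u*v^2) := by ring
    _ ≤ (u+2*v)^3 := cube_amgm hu.le hv.le
  have h3 : Real.exp ((X₁+2*X₂)/3) ≤ (u+2*v)/3 := by
    refine le_of_pow_le_pow_left₀ (by norm_num) (by positivity) h2
  calc Real.exp ((X₁+2*X₂)/3) ≤ (u+2*v)/3 := h3
  _ = Real.exp X₁/(3*ε^2) + 2*(ε*Real.exp X₂)/3 := by rw [hu_def, hv_def]; ring

private lemma gauss_pdf_shift (a : ℝ) (v : ℝ≥0) (x : ℝ) :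
    Real.exp (a*x) * gaussianPDFReal 0 v x
      = Real.exp (a^2*v/2) * gaussianPDFReal (a*v) v x := by
  by_cases hv : v = 0
  · simp [hv, gaussianPDFReal_zero_var]
  · have hv' : 0 < (v:ℝ) := by positivity
    simp only [gaussianPDFReal]
    rw [mul_left_comm, mul_left_comm (Real.exp (a^2*v/2))]
    congr 1
    rw [← Real.exp_add, ← Real.exp_add]
    congr 1
    field_simp
    ring

private lemma integrable_exp_gaussianReal (a : ℝ) (v : ℝ≥0) :
    Integrable (fun x => Real.exp (a*x)) (gaussianReal 0 v) := by
  by_cases hv : v = 0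
  · rw [hv, gaussianReal_zero_var]
    refine ⟨(Real.continuous_exp.comp (continuous_const.mul continuous_id)).stronglyMeasurable.aestronglyMeasurable, ?_⟩
    rw [HasFiniteIntegral, lintegral_dirac]
    exact ENNReal.coe_lt_top
  · rw [gaussianReal_of_var_ne_zero _ hv, gaussianPDF_def]
    rw [show (fun x => ENNReal.ofReal (gaussianPDFReal 0 v x))
        = (fun x => ((gaussianPDFReal 0 v x).toNNReal : ℝ≥0∞)) from rfl]
    rw [integrable_withDensity_iff_integrable_smul
      ((measurable_gaussianPDFReal 0 v).real_toNNReal)]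
    have : (fun x => (gaussianPDFReal 0 v x).toNNReal • Real.exp (a*x))
        = fun x => Real.exp (a^2*v/2) * gaussianPDFReal (a*v) v x := by
      funext x
      rw [NNReal.smul_def, smul_eq_mul, Real.coe_toNNReal _ (gaussianPDFReal_nonneg 0 v x),
        mul_comm, gauss_pdf_shift]
    rw [this]
    exact (integrable_gaussianPDFReal (a*v) v).const_mul _

private lemma integral_exp_gaussianReal (a : ℝ) (v : ℝ≥0) :
    ∫ x, Real.exp (a*x) ∂(gaussianReal 0 v) = Real.exp (a^2*v/2) := by
  by_cases hv : v = 0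
  · rw [hv, gaussianReal_zero_var, integral_dirac]
    simp
  · rw [gaussianReal_of_var_ne_zero _ hv, gaussianPDF_def]
    rw [show (fun x => ENNReal.ofReal (gaussianPDFReal 0 v x))
        = (fun x => ((gaussianPDFReal 0 v x).toNNReal : ℝ≥0∞)) from rfl]
    rw [integral_withDensity_eq_integral_smul ((measurable_gaussianPDFReal 0 v).real_toNNReal)]
    have : (fun x => (gaussianPDFReal 0 v x).toNNReal • Real.exp (a*x))
        = fun x => Real.exp (a^2*v/2) * gaussianPDFReal (a*v) v x := by
      funext x
      rw [NNReal.smul_def, smul_eq_mul, Real.coe_toNNReal _ (gaussianPDFReal_nonneg 0 v x),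
        mul_comm, gauss_pdf_shift]
    rw [this, MeasureTheory.integral_const_mul, integral_gaussianPDFReal_eq_one _ hv, mul_one]

private lemma integral_exp_c (c t : ℝ) (hc : c ≠ 0) :
    ∫ s in (0:ℝ)..t, Real.exp (c*s) = (Real.exp (c*t) - 1)/c := by
  have key : ∀ x ∈ Set.uIcc (0:ℝ) t, HasDerivAt (fun s => Real.exp (c*s)/c) (Real.exp (c*x)) x := by
    intro x _
    have h := ((hasDerivAt_id x).const_mul c).exp
    simpa [mul_comm, hc] using h.div_const c
  rw [intervalIntegral.integral_eq_sub_of_hasDerivAt key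
    ((Real.continuous_exp.comp (continuous_const.mul continuous_id)).intervalIntegrable 0 t)]
  simp [sub_div]

private lemma logistic_pathwise (r σ t : ℝ) (hr : 0 < r) (ht : 0 ≤ t)
    (b : ℝ → ℝ) (hb : Continuous b) :
    (Real.exp (r*t + σ*b t) / (1 + r * ∫ s in (0:ℝ)..t, Real.exp (r*s + σ*b s)))^2
      * (Real.exp (-((r+σ^2)*t)) + r/(r+σ^2)*(1 - Real.exp (-((r+σ^2)*t))))^3
    ≤ Real.exp (-((r+3*σ^2)*t) + 2*σ*(b t)) +
        r * ∫ s in (0:ℝ)..t, Real.exp (-((r+3*σ^2)*(t-s)) + 2*σ*(b t - b s)) := by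
  have hσ : 0 ≤ σ^2 := sq_nonneg σ
  set c : ℝ := r + σ^2 with hc
  have hcpos : 0 < c := by positivity
  -- integrability of all continuous integrands
  have int1 : IntervalIntegrable (fun s => Real.exp (r*s + σ*b s)) volume 0 t :=
    (Real.continuous_exp.comp (by continuity)).intervalIntegrable 0 t
  have int2 : IntervalIntegrable (fun s => Real.exp (-((r+3*σ^2)*(t-s)) + 2*σ*(b t - b s))) volume 0 t :=
    (Real.continuous_exp.comp (by continuity)).intervalIntegrable 0 t
  have int3 : IntervalIntegrable (fun s => Real.exp (-(r*(t-s)) - σ*(b t - b s))) volume 0 t :=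
    (Real.continuous_exp.comp (by continuity)).intervalIntegrable 0 t
  have int4 : IntervalIntegrable (fun s => Real.exp (-(c*(t-s)))) volume 0 t :=
    (Real.continuous_exp.comp (by continuity)).intervalIntegrable 0 t
  have hDen : (0:ℝ) < 1 + r * ∫ s in (0:ℝ)..t, Real.exp (r*s + σ*b s) := by
    have h0 : 0 ≤ ∫ s in (0:ℝ)..t, Real.exp (r*s + σ*b s) :=
      intervalIntegral.integral_nonneg ht (fun u _ => (Real.exp_pos _).le)
    nlinarith
  set Den : ℝ := 1 + r * ∫ s in (0:ℝ)..t, Real.exp (r*s + σ*b s) with hDen_def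
  set G : ℝ := Real.exp (r*t + σ*b t) / Den with hG_def
  set N : ℝ := Real.exp (-((r+3*σ^2)*t) + 2*σ*(b t)) +
        r * ∫ s in (0:ℝ)..t, Real.exp (-((r+3*σ^2)*(t-s)) + 2*σ*(b t - b s)) with hN_def
  set Iv : ℝ := Real.exp (-(r*t + σ*b t)) * Den with hI_def
  set D : ℝ := Real.exp (-(c*t)) + r/c*(1 - Real.exp (-(c*t))) with hD_def
  have hN0 : 0 < N := by
    have h0 : 0 ≤ ∫ s in (0:ℝ)..t, Real.exp (-((r+3*σ^2)*(t-s)) + 2*σ*(b t - b s)) :=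
      intervalIntegral.integral_nonneg ht (fun u _ => (Real.exp_pos _).le)
    have := Real.exp_pos (-((r+3*σ^2)*t) + 2*σ*(b t))
    rw [hN_def]; nlinarith
  have hI0 : 0 < Iv := mul_pos (Real.exp_pos _) hDen
  have hD0 : 0 ≤ D := by
    have h1 : Real.exp (-(c*t)) ≤ 1 := Real.exp_le_one_iff.mpr (by nlinarith)
    have := Real.exp_pos (-(c*t))
    have : 0 ≤ r/c := by positivity
    rw [hD_def]; nlinarith [Real.exp_pos (-(c*t)), div_nonneg hr.le hcpos.le]
  -- subkey C : Iv as sum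
  have hIsum : Iv = Real.exp (-(r*t) - σ*b t) +
      r * ∫ s in (0:ℝ)..t, Real.exp (-(r*(t-s)) - σ*(b t - b s)) := by
    rw [hI_def, hDen_def, mul_add, mul_one]
    congr 1
    · congr 1; ring
    · rw [mul_left_comm]
      congr 1
      rw [← intervalIntegral.integral_const_mul]
      refine intervalIntegral.integral_congr fun s _ => ?_
      rw [← Real.exp_add]; congr 1; ring
  -- subkey A : D as atom + integral
  have hDsum : D = Real.exp (-(c*t)) + r * ∫ s in (0:ℝ)..t, Real.exp (-(c*(t-s))) := by
    have h1 : ∫ s in (0:ℝ)..t, Real.exp (-(c*(t-s)))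
        = Real.exp (-(c*t)) * ((Real.exp (c*t) - 1)/c) := by
      rw [show (fun s => Real.exp (-(c*(t-s)))) = fun s => Real.exp (-(c*t)) * Real.exp (c*s) from
        funext fun s => by rw [← Real.exp_add]; congr 1; ring]
      rw [intervalIntegral.integral_const_mul, integral_exp_c c t (ne_of_gt hcpos)]
    rw [hD_def, h1]
    congr 1
    rw [Real.exp_neg]
    field_simp
  -- key inequality for every ε > 0
  have key : ∀ ε : ℝ, 0 < ε → D ≤ N/(3*ε^2) + 2*(ε*Iv)/3 := by
    intro ε hε
    have atom : Real.exp (-(c*t)) ≤ Real.exp (-((r+3*σ^2)*t) + 2*σ*(b t))/(3*ε^2)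
        + 2*(ε*Real.exp (-(r*t) - σ*b t))/3 := by
      have h := exp_amgm (-((r+3*σ^2)*t) + 2*σ*(b t)) (-(r*t) - σ*b t) hε
      rw [show ((-((r+3*σ^2)*t) + 2*σ*(b t)) + 2*(-(r*t) - σ*b t))/3 = -(c*t) from by
        rw [hc]; ring] at h
      exact h
    have ptwise : ∀ s ∈ Set.Icc (0:ℝ) t, Real.exp (-(c*(t-s)))
        ≤ Real.exp (-((r+3*σ^2)*(t-s)) + 2*σ*(b t - b s))/(3*ε^2)
          + 2*(ε*Real.exp (-(r*(t-s)) - σ*(b t - b s)))/3 := by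
      intro s _
      have h := exp_amgm (-((r+3*σ^2)*(t-s)) + 2*σ*(b t - b s)) (-(r*(t-s)) - σ*(b t - b s)) hε
      rw [show ((-((r+3*σ^2)*(t-s)) + 2*σ*(b t - b s)) + 2*(-(r*(t-s)) - σ*(b t - b s)))/3
          = -(c*(t-s)) from by rw [hc]; ring] at h
      exact h
    have intmono : ∫ s in (0:ℝ)..t, Real.exp (-(c*(t-s)))
        ≤ ∫ s in (0:ℝ)..t, (Real.exp (-((r+3*σ^2)*(t-s)) + 2*σ*(b t - b s))/(3*ε^2)
          + 2*(ε*Real.exp (-(r*(t-s)) - σ*(b t - b s)))/3) := by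
      refine intervalIntegral.integral_mono_on ht int4 ?_ ptwise
      exact ((int2.div_const _).add (((int3.const_mul ε).const_mul 2).div_const 3))
    have intsplit : ∫ s in (0:ℝ)..t, (Real.exp (-((r+3*σ^2)*(t-s)) + 2*σ*(b t - b s))/(3*ε^2)
          + 2*(ε*Real.exp (-(r*(t-s)) - σ*(b t - b s)))/3)
        = (∫ s in (0:ℝ)..t, Real.exp (-((r+3*σ^2)*(t-s)) + 2*σ*(b t - b s)))/(3*ε^2)
          + 2*(ε*(∫ s in (0:ℝ)..t, Real.exp (-(r*(t-s)) - σ*(b t - b s))))/3 := by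
      rw [intervalIntegral.integral_add (int2.div_const _)
        (((int3.const_mul ε).const_mul 2).div_const 3)]
      rw [intervalIntegral.integral_div]
      congr 1
      rw [intervalIntegral.integral_div, intervalIntegral.integral_const_mul,
        intervalIntegral.integral_const_mul]
    rw [hDsum, hN_def, hIsum]
    calc Real.exp (-(c*t)) + r * ∫ s in (0:ℝ)..t, Real.exp (-(c*(t-s)))
        ≤ (Real.exp (-((r+3*σ^2)*t) + 2*σ*(b t))/(3*ε^2)
            + 2*(ε*Real.exp (-(r*t) - σ*b t))/3)
          + r * ((∫ s in (0:ℝ)..t, Real.exp (-((r+3*σ^2)*(t-s)) + 2*σ*(b t - b s)))/(3*ε^2)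
            + 2*(ε*(∫ s in (0:ℝ)..t, Real.exp (-(r*(t-s)) - σ*(b t - b s))))/3) := by
          refine add_le_add atom ?_
          refine mul_le_mul_of_nonneg_left ?_ hr.le
          rw [← intsplit]; exact intmono
      _ = (Real.exp (-((r+3*σ^2)*t) + 2*σ*(b t)) +
            r * ∫ s in (0:ℝ)..t, Real.exp (-((r+3*σ^2)*(t-s)) + 2*σ*(b t - b s)))/(3*ε^2)
          + 2*(ε*(Real.exp (-(r*t) - σ*b t) +
            r * ∫ s in (0:ℝ)..t, Real.exp (-(r*(t-s)) - σ*(b t - b s))))/3 := by ring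
  -- choose ε
  set ε : ℝ := (N/Iv) ^ ((1:ℝ)/3) with hε_def
  have hε : 0 < ε := Real.rpow_pos_of_pos (div_pos hN0 hI0) _
  have hcube : ε^3 = N/Iv := by
    rw [hε_def, ← Real.rpow_natCast ((N/Iv) ^ ((1:ℝ)/3)) 3, ← Real.rpow_mul (div_pos hN0 hI0).le]
    norm_num
  have hNεI : N = ε^3 * Iv := by
    rw [hcube]; field_simp
  have hDle : D ≤ ε * Iv := by
    have h := key ε hε
    rw [hNεI] at h
    calc D ≤ (ε^3*Iv)/(3*ε^2) + 2*(ε*Iv)/3 := h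
      _ = ε * Iv := by field_simp; ring
  have hD3 : D^3 ≤ N * Iv^2 := by
    calc D^3 ≤ (ε*Iv)^3 := pow_le_pow_left₀ hD0 hDle 3
      _ = ε^3 * Iv * Iv^2 := by ring
      _ = N * Iv^2 := by rw [← hNεI]
  have hGI : G * Iv = 1 := by
    rw [hG_def, hI_def, div_mul_eq_mul_div, ← mul_assoc, ← Real.exp_add, add_neg_cancel,
      Real.exp_zero, one_mul, div_self (ne_of_gt hDen)]
  have hG0 : 0 ≤ G := div_nonneg (Real.exp_pos _).le hDen.le
  calc G^2 * D^3 ≤ G^2 * (N * Iv^2) := by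
        refine mul_le_mul_of_nonneg_left hD3 (by positivity)
    _ = N * (G*Iv)^2 := by ring
    _ = N := by rw [hGI]; ring

private lemma decay_integral (c t : ℝ) (hc : 0 < c) :
    ∫ s in (0:ℝ)..t, Real.exp (-(c*(t-s))) = Real.exp (-(c*t)) * ((Real.exp (c*t) - 1)/c) := by
  rw [show (fun s => Real.exp (-(c*(t-s)))) = fun s => Real.exp (-(c*t)) * Real.exp (c*s) from
    funext fun s => by rw [← Real.exp_add]; congr 1; ring]
  rw [intervalIntegral.integral_const_mul, integral_exp_c c t (ne_of_gt hc)]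

private lemma exp_moment' {Ω : Type*} [MeasureSpace Ω] {X : Ω → ℝ} (hX : Measurable X)
    {v : ℝ≥0} (hlaw : Measure.map X ℙ = gaussianReal 0 v) (a : ℝ) :
    Integrable (fun ω => Real.exp (a * X ω)) ℙ ∧
      ∫ ω, Real.exp (a * X ω) ∂ℙ = Real.exp (a^2*v/2) := by
  have hsm : AEStronglyMeasurable (fun x => Real.exp (a*x)) (Measure.map X ℙ) :=
    (Real.continuous_exp.comp (continuous_const.mul continuous_id)).aestronglyMeasurable
  constructor
  · have h := integrable_exp_gaussianReal a v
    rw [← hlaw] at h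
    exact (integrable_map_measure hsm hX.aemeasurable).mp h
  · rw [← integral_map hX.aemeasurable hsm, hlaw, integral_exp_gaussianReal]

theorem logistic_second_moment_bound
    {Ω : Type*} [MeasureSpace Ω] [IsProbabilityMeasure (ℙ : Measure Ω)]
    (r σ : ℝ) (hr : 0 < r)
    (B : ℝ → Ω → ℝ)
    (hBmeas : ∀ t, Measurable (B t))
    (hB0 : ∀ᵐ ω ∂(ℙ : Measure Ω), B 0 ω = 0)
    (hBcont : ∀ᵐ ω ∂(ℙ : Measure Ω), Continuous fun t => B t ω)
    (hBindep : ∀ (m : ℕ) (t : Fin (m + 1) → ℝ), (∀ i, 0 ≤ t i) → Monotone t →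
      iIndepFun
        (fun (i : Fin m) ω => B (t i.succ) ω - B (t i.castSucc) ω) ℙ)
    (hBgauss : ∀ s t : ℝ, 0 ≤ s → s ≤ t →
      Measure.map (fun ω => B t ω - B s ω) ℙ = gaussianReal 0 (Real.toNNReal (t - s)))
    (g : ℝ → Ω → ℝ)
    (hg : ∀ (t : ℝ) (ω : Ω), g t ω =
      Real.exp (r * t + σ * B t ω) /
        (1 + r * ∫ s in (0:ℝ)..t, Real.exp (r * s + σ * B s ω))) :
    ∀ t : ℝ, 0 ≤ t →
      ∫ ω, (g t ω) ^ 2 ∂(ℙ : Measure Ω) ≤ (1 + σ ^ 2 / r) ^ 2 := by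
  intro t ht
  have hσ : 0 ≤ σ^2 := sq_nonneg σ
  set c : ℝ := r + σ^2 with hc
  have hcpos : 0 < c := by positivity
  -- a good measurable set on which paths are continuous and start at 0
  have hae : ∀ᵐ ω ∂(ℙ : Measure Ω), (Continuous fun s => B s ω) ∧ B 0 ω = 0 := hBcont.and hB0
  obtain ⟨T, hTsub, hTmeas, hT0⟩ := exists_measurable_superset_of_null (ae_iff.mp hae)
  set S : Set Ω := Tᶜ with hS_def
  have hSmeas : MeasurableSet S := hTmeas.compl
  have hS : ∀ ω ∈ S, (Continuous fun s => B s ω) ∧ B 0 ω = 0 := by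
    intro ω hω
    by_contra h
    exact hω (hTsub h)
  have haeS : ∀ᵐ ω ∂(ℙ : Measure Ω), ω ∈ S := by
    rw [ae_iff]
    refine measure_mono_null (fun ω hω => ?_) hT0
    simpa [hS_def] using hω
  -- the modification B'
  set B' : ℝ → Ω → ℝ := fun s => S.indicator (B s) with hB'_def
  have hB'meas : ∀ s, Measurable (B' s) := fun s => (hBmeas s).indicator hSmeas
  have hB'mem : ∀ (s : ℝ) {ω : Ω}, ω ∈ S → B' s ω = B s ω := by
    intro s ω hω
    exact Set.indicator_of_mem hω _
  have hB'cont : ∀ ω, Continuous fun s => B' s ω := by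
    intro ω
    by_cases hω : ω ∈ S
    · have : (fun s => B' s ω) = fun s => B s ω := funext fun s => hB'mem s hω
      rw [this]; exact (hS ω hω).1
    · have : (fun s => B' s ω) = fun _ => 0 :=
        funext fun s => Set.indicator_of_notMem hω _
      rw [this]; exact continuous_const
  have hjoint : Measurable (Function.uncurry B') :=
    measurable_uncurry_of_continuous_of_measurable hB'cont hB'meas
  have hjoint' : Measurable fun p : ℝ × Ω => B' p.1 p.2 := hjoint
  have hB'eq : ∀ s, B' s =ᵐ[(ℙ : Measure Ω)] B s := by
    intro s
    filter_upwards [haeS] with ω hω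
    exact hB'mem s hω
  -- laws
  have hlaw : ∀ s u : ℝ, 0 ≤ s → s ≤ u →
      Measure.map (fun ω => B' u ω - B' s ω) ℙ = gaussianReal 0 (Real.toNNReal (u - s)) := by
    intro s u hs hsu
    rw [← hBgauss s u hs hsu]
    apply Measure.map_congr
    filter_upwards [hB'eq s, hB'eq u] with ω h1 h2
    rw [h1, h2]
  have hB'zero : ∀ ω, B' 0 ω = 0 := by
    intro ω
    by_cases hω : ω ∈ S
    · rw [hB'mem 0 hω]; exact (hS ω hω).2
    · exact Set.indicator_of_notMem hω _
  have hlaw0 : Measure.map (fun ω => B' t ω) ℙ = gaussianReal 0 (Real.toNNReal t) := by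
    have h := hlaw 0 t le_rfl ht
    simpa [hB'zero, sub_zero] using h
  -- first moment piece
  obtain ⟨int_t, val_t⟩ := exp_moment' (hB'meas t) hlaw0 (2*σ)
  rw [Real.coe_toNNReal t ht] at val_t
  -- the kernel F
  set F : ℝ → Ω → ℝ :=
    fun s ω => Real.exp (-((r+3*σ^2)*(t-s)) + 2*σ*(B' t ω - B' s ω)) with hF_def
  have hFmeas : Measurable fun p : ℝ × Ω => F p.1 p.2 := by
    apply Real.measurable_exp.comp
    apply Measurable.add
    · exact ((measurable_const.sub measurable_fst).const_mul (r+3*σ^2)).neg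
    · exact ((((hB'meas t).comp measurable_snd).sub hjoint').const_mul (2*σ))
  have hFcont : ∀ ω, Continuous fun s => F s ω := by
    intro ω
    apply Real.continuous_exp.comp
    apply Continuous.add
    · exact (continuous_const.mul (continuous_const.sub continuous_id)).neg
    · exact continuous_const.mul (continuous_const.sub (hB'cont ω))
  have hFnn : ∀ s ω, 0 ≤ F s ω := fun s ω => (Real.exp_pos _).le
  -- moments of F for fixed s
  have hFint : ∀ s : ℝ, 0 ≤ s → s ≤ t →
      Integrable (fun ω => F s ω) (ℙ : Measure Ω) ∧
      ∫ ω, F s ω ∂(ℙ : Measure Ω) = Real.exp (-(c*(t-s))) := by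
    intro s hs hst
    obtain ⟨hint, hval⟩ := exp_moment' ((hB'meas t).sub (hB'meas s)) (hlaw s t hs hst) (2*σ)
    rw [Real.coe_toNNReal (t-s) (by linarith)] at hval
    have hrw : (fun ω => F s ω)
        = fun ω => Real.exp (-((r+3*σ^2)*(t-s))) * Real.exp (2*σ*(B' t ω - B' s ω)) := by
      funext ω
      rw [hF_def, ← Real.exp_add]
    constructor
    · rw [hrw]
      exact hint.const_mul _
    · rw [hrw, MeasureTheory.integral_const_mul,
        (show ∫ ω, Real.exp (2*σ*(B' t ω - B' s ω)) ∂(ℙ : Measure Ω) = _ from hval), ← Real.exp_add]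
      congr 1
      ring
  -- the inner integral as a function of ω
  set H : Ω → ℝ := fun ω => ∫ s in Set.Ioc (0:ℝ) t, F s ω with hH_def
  have hHnn : ∀ ω, 0 ≤ H ω := fun ω =>
    setIntegral_nonneg measurableSet_Ioc (fun s _ => hFnn s ω)
  have hHsm : AEStronglyMeasurable H (ℙ : Measure Ω) := by
    have hsm : StronglyMeasurable fun p : Ω × ℝ => F p.2 p.1 :=
      (hFmeas.comp measurable_swap).stronglyMeasurable
    exact (hsm.integral_prod_right').aestronglyMeasurable
  -- lintegral computation
  have key2 : ∫⁻ ω, ENNReal.ofReal (H ω) ∂(ℙ : Measure Ω)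
      = ENNReal.ofReal (∫ s in Set.Ioc (0:ℝ) t, Real.exp (-(c*(t-s)))) := by
    have step1 : ∀ ω, ENNReal.ofReal (H ω)
        = ∫⁻ s in Set.Ioc (0:ℝ) t, ENNReal.ofReal (F s ω) := by
      intro ω
      rw [hH_def]
      exact ofReal_integral_eq_lintegral_ofReal
        ((hFcont ω).integrableOn_Ioc) (Filter.Eventually.of_forall fun s => hFnn s ω)
    simp_rw [step1]
    rw [lintegral_lintegral_swap]
    · have step2 : ∫⁻ s in Set.Ioc (0:ℝ) t, ∫⁻ ω, ENNReal.ofReal (F s ω) ∂(ℙ : Measure Ω)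
          = ∫⁻ s in Set.Ioc (0:ℝ) t, ENNReal.ofReal (Real.exp (-(c*(t-s)))) := by
        refine setLIntegral_congr_fun measurableSet_Ioc
          (fun s hs => ?_)
        obtain ⟨hint, hval⟩ := hFint s hs.1.le hs.2
        rw [← hval]
        exact (ofReal_integral_eq_lintegral_ofReal hint
          (Filter.Eventually.of_forall fun ω => hFnn s ω)).symm
      rw [step2]
      rw [← ofReal_integral_eq_lintegral_ofReal]
      · exact (Real.continuous_exp.comp
          ((continuous_const.mul (continuous_const.sub continuous_id)).neg)).integrableOn_Ioc
      · exact Filter.Eventually.of_forall fun s => (Real.exp_pos _).le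
    · exact (hFmeas.comp measurable_swap).ennreal_ofReal.aemeasurable
  have hHint : Integrable H (ℙ : Measure Ω) := by
    refine ⟨hHsm, ?_⟩
    rw [hasFiniteIntegral_iff_ofReal (Filter.Eventually.of_forall hHnn), key2]
    exact ENNReal.ofReal_lt_top
  have hHval : ∫ ω, H ω ∂(ℙ : Measure Ω) = ∫ s in Set.Ioc (0:ℝ) t, Real.exp (-(c*(t-s))) := by
    rw [integral_eq_lintegral_of_nonneg_ae (Filter.Eventually.of_forall hHnn) hHsm, key2,
      ENNReal.toReal_ofReal]
    exact setIntegral_nonneg measurableSet_Ioc (fun s _ => (Real.exp_pos _).le)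
  -- assemble N
  set Nf : Ω → ℝ := fun ω => Real.exp (-((r+3*σ^2)*t) + 2*σ*(B' t ω)) + r * H ω with hNf_def
  have hNint : Integrable Nf (ℙ : Measure Ω) := by
    refine Integrable.add ?_ (hHint.const_mul r)
    have : (fun ω => Real.exp (-((r+3*σ^2)*t) + 2*σ*(B' t ω)))
        = fun ω => Real.exp (-((r+3*σ^2)*t)) * Real.exp (2*σ*(B' t ω)) := by
      funext ω; rw [← Real.exp_add]
    rw [this]
    exact int_t.const_mul _
  have hNval : ∫ ω, Nf ω ∂(ℙ : Measure Ω)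
      = Real.exp (-(c*t)) + r/c*(1 - Real.exp (-(c*t))) := by
    rw [hNf_def, integral_add ?h1 (hHint.const_mul r)]
    case h1 =>
      have : (fun ω => Real.exp (-((r+3*σ^2)*t) + 2*σ*(B' t ω)))
          = fun ω => Real.exp (-((r+3*σ^2)*t)) * Real.exp (2*σ*(B' t ω)) := by
        funext ω; rw [← Real.exp_add]
      rw [this]
      exact int_t.const_mul _
    have e1 : ∫ ω, Real.exp (-((r+3*σ^2)*t) + 2*σ*(B' t ω)) ∂(ℙ : Measure Ω)
        = Real.exp (-(c*t)) := by
      have : (fun ω => Real.exp (-((r+3*σ^2)*t) + 2*σ*(B' t ω)))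
          = fun ω => Real.exp (-((r+3*σ^2)*t)) * Real.exp (2*σ*(B' t ω)) := by
        funext ω; rw [← Real.exp_add]
      rw [this, MeasureTheory.integral_const_mul, val_t, ← Real.exp_add]
      congr 1
      rw [hc]; ring
    have e2 : ∫ ω, r * H ω ∂(ℙ : Measure Ω) = r/c*(1 - Real.exp (-(c*t))) := by
      rw [MeasureTheory.integral_const_mul, hHval, ← intervalIntegral.integral_of_le ht,
        decay_integral c t hcpos, Real.exp_neg]
      field_simp
    rw [e1, e2]
  -- pathwise bound
  set D : ℝ := Real.exp (-(c*t)) + r/c*(1 - Real.exp (-(c*t))) with hD_def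
  have hDlb : r/c ≤ D := by
    have h1 : 0 < Real.exp (-(c*t)) := Real.exp_pos _
    have h2 : r/c ≤ 1 := (div_le_one hcpos).mpr (by nlinarith)
    nlinarith
  have hD0 : 0 < D := lt_of_lt_of_le (by positivity) hDlb
  have hpath : ∀ ω, (Real.exp (r*t + σ*B' t ω) /
        (1 + r * ∫ s in (0:ℝ)..t, Real.exp (r*s + σ*B' s ω)))^2 ≤ Nf ω / D^3 := by
    intro ω
    rw [le_div_iff₀ (by positivity)]
    show _ * _ ≤ Real.exp (-((r+3*σ^2)*t) + 2*σ*(B' t ω)) +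
      r * ∫ s in Set.Ioc (0:ℝ) t, Real.exp (-((r+3*σ^2)*(t-s)) + 2*σ*(B' t ω - B' s ω))
    rw [← intervalIntegral.integral_of_le ht, hD_def, hc]
    exact logistic_pathwise r σ t hr ht (fun s => B' s ω) (hB'cont ω)
  -- almost-sure identification of g with the primed version
  have hgae : (fun ω => (g t ω)^2) =ᵐ[(ℙ : Measure Ω)]
      fun ω => (Real.exp (r*t + σ*B' t ω) /
        (1 + r * ∫ s in (0:ℝ)..t, Real.exp (r*s + σ*B' s ω)))^2 := by
    filter_upwards [haeS] with ω hω
    have hInt : ∫ s in (0:ℝ)..t, Real.exp (r*s + σ*B s ω)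
        = ∫ s in (0:ℝ)..t, Real.exp (r*s + σ*B' s ω) :=
      intervalIntegral.integral_congr (fun s _ => by rw [hB'mem s hω])
    rw [hg t ω, hB'mem t hω, hInt]
  -- final chain
  rw [integral_congr_ae hgae]
  have hle : ∫ ω, (Real.exp (r*t + σ*B' t ω) /
        (1 + r * ∫ s in (0:ℝ)..t, Real.exp (r*s + σ*B' s ω)))^2 ∂(ℙ : Measure Ω)
      ≤ ∫ ω, Nf ω / D^3 ∂(ℙ : Measure Ω) := by
    refine integral_mono_of_nonneg (Filter.Eventually.of_forall fun ω => sq_nonneg _)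
      (hNint.div_const _) (Filter.Eventually.of_forall hpath)
  refine le_trans hle ?_
  rw [MeasureTheory.integral_div, hNval]
  have hfinal : D / D^3 = 1/D^2 := by
    field_simp
  rw [hfinal]
  have h1 : (r/c)^2 ≤ D^2 := pow_le_pow_left₀ (by positivity) hDlb 2
  have h2 : 1/D^2 ≤ 1/(r/c)^2 := by
    apply one_div_le_one_div_of_le (by positivity) h1
  refine le_trans h2 ?_
  have : 1/(r/c)^2 = (1 + σ^2/r)^2 := by
    rw [hc]
    field_simp
  rw [this]
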